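/- Let k : (0,∞) → [0,∞) be nonincreasing and lower semicontinuous, let σ be a locally finite positive Borel measure on ℝ^n, let 1 < p < ∞ and 0 < c < ∞. Suppose σ is doubling and the pair (k,σ) satisfies the LBO condition. Then there exist constants (independent of μ) such that for every locally finite positive Borel measure μ on ℝ^n, ∑_{Q∈𝒟} k(c r_Q) σ(Q) (k̄(r_Q)(x_Q))^{p'−1} μ(Q)^{p'} is comparable to ∑_{Q∈𝒟} k(r_Q) σ(Q) (k̄(r_Q)(x_Q))^{p'−1} μ(Q)^{p'}, where x_Q denotes the center of Q. -/

import Mathlib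

open MeasureTheory ENNReal Set
open scoped Classical ENNReal NNReal

noncomputable section

/-- We model `ℝ^n` as `EuclideanSpace ℝ (Fin n)`. -/
abbrev Euc (n : ℕ) := EuclideanSpace ℝ (Fin n)

/-- Indices `(k, m)` of dyadic cubes in `ℝ^n`. -/
abbrev DIdx (n : ℕ) := ℤ × (Fin n → ℤ)

/-- The dyadic cube with index `q = (k, m)`, namely `2^{-k}(m + [0,1)^n)`. -/
def dCube (n : ℕ) (q : DIdx n) : Set (Euc n) :=
  {x | ∀ i, (q.2 i : ℝ) ≤ (2:ℝ) ^ q.1 * x i ∧ (2:ℝ) ^ q.1 * x i < (q.2 i : ℝ) + 1}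

/-- The side length of the dyadic cube of index `q = (k, m)` is `2^{-k}`. -/
def sideLen (n : ℕ) (q : DIdx n) : ℝ := (2:ℝ) ^ (-q.1)

/-- Characteristic function of a dyadic cube, with values in `ℝ≥0∞`. -/
def ch (n : ℕ) (q : DIdx n) (x : Euc n) : ℝ≥0∞ := (dCube n q).indicator 1 x

/-- `K̄(Q)(x) = σ(Q)⁻¹ ∑_{Q' ⊆ Q} K(Q') σ(Q') χ_{Q'}(x)`.
(Since `σ(Q') ≤ σ(Q)` for `Q' ⊆ Q`, this is automatically `0` when `σ(Q) = 0`,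
by the convention `∞ · 0 = 0` in `ℝ≥0∞`.) -/
def Kbar (n : ℕ) (σ : Measure (Euc n)) (K : DIdx n → ℝ≥0∞) (q : DIdx n) (x : Euc n) : ℝ≥0∞ :=
  (σ (dCube n q))⁻¹ *
    ∑' q' : DIdx n, if dCube n q' ⊆ dCube n q then K q' * σ (dCube n q') * ch n q' x else 0

/-- `k̄(r)(x) = (1/σ(B(x,r))) ∫_0^r k(s) σ(B(x,s)) ds/s`. -/
def kbar (n : ℕ) (σ : Measure (Euc n)) (k : ℝ → ℝ) (r : ℝ) (x : Euc n) : ℝ≥0∞ :=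
  (σ (Metric.ball x r))⁻¹ *
    ∫⁻ s in Ioo (0:ℝ) r, ENNReal.ofReal (k s / s) * σ (Metric.ball x s)

/-- `σ` is a doubling measure: `σ(B(x,2r)) ≤ C₀ σ(B(x,r))` for all `x`, `r > 0`. -/
def Doubling (n : ℕ) (σ : Measure (Euc n)) : Prop :=
  ∃ C₀ : ℝ, 0 < C₀ ∧ ∀ (x : Euc n) (r : ℝ), 0 < r →
    σ (Metric.ball x (2 * r)) ≤ ENNReal.ofReal C₀ * σ (Metric.ball x r)

/-- The pair `(k,σ)` satisfies the logarithmic bounded oscillation (LBO) condition: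
`sup_{y ∈ B(x,r)} k̄(r)(y) ≤ A inf_{y ∈ B(x,r)} k̄(r)(y)` uniformly in `x`, `r`. -/
def LBO (n : ℕ) (σ : Measure (Euc n)) (k : ℝ → ℝ) : Prop :=
  ∃ A : ℝ, 0 < A ∧ ∀ (x : Euc n) (r : ℝ), 0 < r →
    ∀ y ∈ Metric.ball x r, ∀ z ∈ Metric.ball x r,
      kbar n σ k r y ≤ ENNReal.ofReal A * kbar n σ k r z

/-- The center of the dyadic cube with index `q = (k, m)`. -/
def dCenter (n : ℕ) (q : DIdx n) : Euc n :=
  WithLp.toLp 2 (fun i => ((q.2 i : ℝ) + 1 / 2) * (2:ℝ) ^ (-q.1))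

/-- The sum `∑_Q k(c r_Q) σ(Q) (k̄(r_Q)(x_Q))^{p'-1} μ(Q)^{p'}`, where `x_Q` is the center
of `Q` and `p' = p/(p-1)`. -/
def dyadicWolffSum (n : ℕ) (σ : Measure (Euc n)) (k : ℝ → ℝ) (p c : ℝ)
    (μ : Measure (Euc n)) : ℝ≥0∞ :=
  ∑' Q : DIdx n, ENNReal.ofReal (k (c * sideLen n Q)) * σ (dCube n Q) *
    (kbar n σ k (sideLen n Q) (dCenter n Q)) ^ (p / (p - 1) - 1) *
      (μ (dCube n Q)) ^ (p / (p - 1))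

variable {n : ℕ}

lemma measurable_proj (i : Fin n) : Measurable fun x : Euc n => x i :=
  (EuclideanSpace.proj (𝕜 := ℝ) i).continuous.measurable

lemma sideLen_pos (q : DIdx n) : 0 < sideLen n q := by
  unfold sideLen; positivity

lemma measurable_dCube (q : DIdx n) : MeasurableSet (dCube n q) := by
  have : dCube n q = ⋂ i, {x : Euc n | (q.2 i : ℝ) ≤ (2:ℝ) ^ q.1 * x i} ∩
      {x : Euc n | (2:ℝ) ^ q.1 * x i < (q.2 i : ℝ) + 1} := by
    ext x; simp [dCube, forall_and]
  rw [this]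
  refine MeasurableSet.iInter fun i => MeasurableSet.inter ?_ ?_
  · exact measurableSet_le measurable_const ((measurable_proj i).const_mul _)
  · exact measurableSet_lt ((measurable_proj i).const_mul _) measurable_const

lemma ball_lt_top (σ : Measure (Euc n)) [IsLocallyFiniteMeasure σ] (x : Euc n) (r : ℝ) :
    σ (Metric.ball x r) < ∞ := by
  refine lt_of_le_of_lt (measure_mono Metric.ball_subset_closedBall) ?_
  exact (isCompact_closedBall x r).measure_lt_top

/-- The integral part of `kbar`. -/
def kint (σ : Measure (Euc n)) (k : ℝ → ℝ) (r : ℝ) (x : Euc n) : ℝ≥0∞ :=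
  ∫⁻ s in Ioo (0:ℝ) r, ENNReal.ofReal (k s / s) * σ (Metric.ball x s)

lemma kbar_eq (σ : Measure (Euc n)) (k : ℝ → ℝ) (r : ℝ) (x : Euc n) :
    kbar n σ k r x = (σ (Metric.ball x r))⁻¹ * kint σ k r x := rfl

lemma kint_mono (σ : Measure (Euc n)) (k : ℝ → ℝ) {r r' : ℝ} (h : r ≤ r') (x : Euc n) :
    kint σ k r x ≤ kint σ k r' x :=
  lintegral_mono_set (Ioo_subset_Ioo le_rfl h)

lemma kbar_eq_zero_of_ball_zero (σ : Measure (Euc n)) (k : ℝ → ℝ) {r : ℝ} {x : Euc n}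
    (h : σ (Metric.ball x r) = 0) : kbar n σ k r x = 0 := by
  rw [kbar_eq]
  have : kint σ k r x = 0 := by
    rw [kint]
    refine le_antisymm ?_ zero_le
    calc ∫⁻ s in Ioo (0:ℝ) r, ENNReal.ofReal (k s / s) * σ (Metric.ball x s)
        ≤ ∫⁻ s in Ioo (0:ℝ) r, 0 := by
          refine setLIntegral_mono' measurableSet_Ioo fun s hs => ?_
          have : σ (Metric.ball x s) = 0 :=
            le_antisymm (le_trans (measure_mono (Metric.ball_subset_ball hs.2.le)) h.le)
              zero_le
          simp [this]
      _ = 0 := lintegral_zero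
  simp [this]

lemma inv_le_mul_inv_of_le {a b : ℝ≥0∞} {c : ℝ} (hc : 0 < c)
    (h : a ≤ ENNReal.ofReal c * b) : b⁻¹ ≤ ENNReal.ofReal c * a⁻¹ := by
  have hc0 : (ENNReal.ofReal c) ≠ 0 := by simp [hc]
  have hct : (ENNReal.ofReal c) ≠ ∞ := ENNReal.ofReal_ne_top
  have h1 : (ENNReal.ofReal c * b)⁻¹ ≤ a⁻¹ := ENNReal.inv_le_inv.mpr h
  have h2 : (ENNReal.ofReal c * b)⁻¹ = (ENNReal.ofReal c)⁻¹ * b⁻¹ :=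
    ENNReal.mul_inv (Or.inl hc0) (Or.inl hct)
  calc b⁻¹ = ENNReal.ofReal c * ((ENNReal.ofReal c)⁻¹ * b⁻¹) := by
        rw [← mul_assoc, ENNReal.mul_inv_cancel hc0 hct, one_mul]
    _ ≤ ENNReal.ofReal c * a⁻¹ := by rw [← h2]; exact mul_le_mul_right h1 _

section Doubling

variable {σ : Measure (Euc n)} {C₀ : ℝ} (hC₀ : 0 < C₀)
  (hD : ∀ (x : Euc n) (r : ℝ), 0 < r →
    σ (Metric.ball x (2 * r)) ≤ ENNReal.ofReal C₀ * σ (Metric.ball x r))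

include hC₀ hD

lemma doubling_iterate (L : ℕ) (x : Euc n) {r : ℝ} (hr : 0 < r) :
    σ (Metric.ball x (2 ^ L * r)) ≤ ENNReal.ofReal (C₀ ^ L) * σ (Metric.ball x r) := by
  induction L with
  | zero => simp
  | succ L ih =>
    have h1 : (2:ℝ) ^ (L + 1) * r = 2 * (2 ^ L * r) := by ring
    calc σ (Metric.ball x ((2:ℝ) ^ (L + 1) * r))
        ≤ ENNReal.ofReal C₀ * σ (Metric.ball x ((2:ℝ) ^ L * r)) := by
          rw [h1]; exact hD x _ (by positivity)
      _ ≤ ENNReal.ofReal C₀ * (ENNReal.ofReal (C₀ ^ L) * σ (Metric.ball x r)) :=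
          mul_le_mul_right ih _
      _ = ENNReal.ofReal (C₀ ^ (L + 1)) * σ (Metric.ball x r) := by
          rw [← mul_assoc, ← ENNReal.ofReal_mul hC₀.le, pow_succ, mul_comm C₀]

lemma doubling_scale (L : ℕ) (x : Euc n) {r r' : ℝ} (hr : 0 < r) (h1 : r ≤ r')
    (h2 : r' ≤ 2 ^ L * r) :
    σ (Metric.ball x r') ≤ ENNReal.ofReal (C₀ ^ L) * σ (Metric.ball x r) :=
  le_trans (measure_mono (Metric.ball_subset_ball h2)) (doubling_iterate hC₀ hD L x hr)

/-- The easy comparison: enlarging the radius of `kbar`. -/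
lemma kbar_le_kbar_bigger (k : ℝ → ℝ) (L : ℕ) (x : Euc n) {r r' : ℝ} (hr : 0 < r)
    (h1 : r ≤ r') (h2 : r' ≤ 2 ^ L * r) :
    kbar n σ k r x ≤ ENNReal.ofReal (C₀ ^ L) * kbar n σ k r' x := by
  rw [kbar_eq, kbar_eq]
  have hinv : (σ (Metric.ball x r))⁻¹ ≤ ENNReal.ofReal (C₀ ^ L) * (σ (Metric.ball x r'))⁻¹ :=
    inv_le_mul_inv_of_le (by positivity) (doubling_scale hC₀ hD L x hr h1 h2)
  calc (σ (Metric.ball x r))⁻¹ * kint σ k r x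
      ≤ (ENNReal.ofReal (C₀ ^ L) * (σ (Metric.ball x r'))⁻¹) * kint σ k r' x :=
        mul_le_mul' hinv (kint_mono σ k h1 x)
    _ = ENNReal.ofReal (C₀ ^ L) * ((σ (Metric.ball x r'))⁻¹ * kint σ k r' x) := by
        rw [mul_assoc]

end Doubling

section Halving

variable {σ : Measure (Euc n)} [IsLocallyFiniteMeasure σ] {C₀ : ℝ} (hC₀ : 0 < C₀)
  (hD : ∀ (x : Euc n) (r : ℝ), 0 < r →
    σ (Metric.ball x (2 * r)) ≤ ENNReal.ofReal C₀ * σ (Metric.ball x r))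
  {k : ℝ → ℝ} (hk0 : ∀ r ∈ Ioi (0:ℝ), 0 ≤ k r) (hmono : AntitoneOn k (Ioi (0:ℝ)))

include hC₀ hD hk0 hmono

/-- The key estimate: `k(r) ≤ 2 σ(B(x,r/2))⁻¹ ∫_0^r k σ ds/s`. -/
lemma kr_le (x : Euc n) {r : ℝ} (hr : 0 < r) :
    ENNReal.ofReal (k r) * σ (Metric.ball x (r / 2)) ≤ 2 * kint σ k r x := by
  have hmeas : σ (Metric.ball x (r/2)) ≠ ∞ := (ball_lt_top σ x _).ne
  have key : ENNReal.ofReal (k r / 2) * σ (Metric.ball x (r/2)) ≤ kint σ k r x := by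
    calc ENNReal.ofReal (k r / 2) * σ (Metric.ball x (r/2))
        = ENNReal.ofReal (k r / r) * σ (Metric.ball x (r/2)) * volume (Ioo (r/2) r) := by
          rw [Real.volume_Ioo]
          rw [mul_assoc, mul_comm (σ _), ← mul_assoc,
            ← ENNReal.ofReal_mul (div_nonneg (hk0 r (mem_Ioi.mpr hr)) hr.le)]
          congr 2
          field_simp
          ring
      _ = ∫⁻ _ in Ioo (r/2) r, ENNReal.ofReal (k r / r) * σ (Metric.ball x (r/2)) := by
          rw [setLIntegral_const]
      _ ≤ ∫⁻ s in Ioo (r/2) r, ENNReal.ofReal (k s / s) * σ (Metric.ball x s) := by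
          refine setLIntegral_mono' measurableSet_Ioo fun s hs => ?_
          have hs0 : 0 < s := lt_trans (by positivity) hs.1
          have hks : k r ≤ k s := hmono (mem_Ioi.mpr hs0) (mem_Ioi.mpr hr) hs.2.le
          have h1 : k r / r ≤ k s / s :=
            div_le_div₀ (hk0 s (mem_Ioi.mpr hs0)) hks hs0 hs.2.le
          exact mul_le_mul' (ENNReal.ofReal_le_ofReal h1)
            (measure_mono (Metric.ball_subset_ball hs.1.le))
      _ ≤ kint σ k r x := lintegral_mono_set (fun s hs => ⟨by linarith [hs.1, hr], hs.2⟩)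
  calc ENNReal.ofReal (k r) * σ (Metric.ball x (r/2))
      = 2 * (ENNReal.ofReal (k r / 2) * σ (Metric.ball x (r/2))) := by
        rw [← mul_assoc]
        congr 1
        rw [show (2:ℝ≥0∞) = ENNReal.ofReal 2 by simp, ← ENNReal.ofReal_mul (by norm_num)]
        congr 1
        ring
    _ ≤ 2 * kint σ k r x := mul_le_mul_right key _

lemma kbar_double_le (x : Euc n) {r : ℝ} (hr : 0 < r) :
    kbar n σ k (2 * r) x ≤ ENNReal.ofReal (1 + 2 * C₀) * kbar n σ k r x := by
  set a := σ (Metric.ball x (r / 2)) with ha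
  set b := σ (Metric.ball x r) with hb
  set d := σ (Metric.ball x (2 * r)) with hd
  by_cases hd0 : d = 0
  · rw [kbar_eq_zero_of_ball_zero σ k hd0]
    exact zero_le
  have ha0 : a ≠ 0 := by
    intro h0
    apply hd0
    have h2 : (2:ℝ) * r = 2 ^ 2 * (r / 2) := by ring
    have := doubling_iterate hC₀ hD 2 x (by positivity : (0:ℝ) < r / 2)
    rw [← h2] at this
    refine le_antisymm (le_trans this ?_) zero_le
    rw [← ha, h0, mul_zero]
  have hat : a ≠ ∞ := (ball_lt_top σ x _).ne
  have hdt : d ≠ ∞ := (ball_lt_top σ x _).ne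
  have hba : b ≤ ENNReal.ofReal C₀ * a := by
    have h2 : r = 2 * (r / 2) := by ring
    rw [hb, h2]; exact hD x _ (by positivity)
  have hainv : a⁻¹ ≤ ENNReal.ofReal C₀ * b⁻¹ := inv_le_mul_inv_of_le hC₀ hba
  -- tail estimate
  have htail : kint σ k (2 * r) x ≤ kint σ k r x + ENNReal.ofReal (k r) * d := by
    have hsplit : Ioo (0:ℝ) (2*r) ⊆ Ioo (0:ℝ) r ∪ Ico r (2*r) := by
      intro s hs
      rcases lt_or_ge s r with h | h
      · exact Or.inl ⟨hs.1, h⟩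
      · exact Or.inr ⟨h, hs.2⟩
    calc kint σ k (2*r) x
        ≤ ∫⁻ s in Ioo (0:ℝ) r ∪ Ico r (2*r), ENNReal.ofReal (k s / s) * σ (Metric.ball x s) :=
          lintegral_mono_set hsplit
      _ ≤ kint σ k r x + ∫⁻ s in Ico r (2*r), ENNReal.ofReal (k s / s) * σ (Metric.ball x s) :=
          lintegral_union_le _ _ _
      _ ≤ kint σ k r x + ENNReal.ofReal (k r) * d := by
          refine add_le_add le_rfl ?_
          calc ∫⁻ s in Ico r (2*r), ENNReal.ofReal (k s / s) * σ (Metric.ball x s)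
              ≤ ∫⁻ _ in Ico r (2*r), ENNReal.ofReal (k r / r) * d := by
                refine setLIntegral_mono' measurableSet_Ico fun s hs => ?_
                have hs0 : 0 < s := lt_of_lt_of_le hr hs.1
                have hks : k s ≤ k r := hmono (mem_Ioi.mpr hr) (mem_Ioi.mpr hs0) hs.1
                have h1 : k s / s ≤ k r / r :=
                  div_le_div₀ (hk0 r (mem_Ioi.mpr hr)) hks hr hs.1
                exact mul_le_mul' (ENNReal.ofReal_le_ofReal h1)
                  (measure_mono (Metric.ball_subset_ball hs.2.le))
            _ = ENNReal.ofReal (k r / r) * d * volume (Ico r (2*r)) := setLIntegral_const _ _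
            _ = ENNReal.ofReal (k r) * d := by
                rw [Real.volume_Ico, mul_assoc, mul_comm d, ← mul_assoc,
                  ← ENNReal.ofReal_mul (div_nonneg (hk0 r (mem_Ioi.mpr hr)) hr.le)]
                congr 2
                rw [show 2*r - r = r by ring, div_mul_cancel₀ _ hr.ne']
  -- k r bound
  have hkr : ENNReal.ofReal (k r) ≤ ENNReal.ofReal (2 * C₀) * (b⁻¹ * kint σ k r x) := by
    have h1 := kr_le hC₀ hD hk0 hmono x hr
    rw [← ha] at h1
    have h2 : ENNReal.ofReal (k r) * a * a⁻¹ ≤ 2 * kint σ k r x * a⁻¹ :=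
      mul_le_mul_left h1 _
    rw [mul_assoc, ENNReal.mul_inv_cancel ha0 hat, mul_one, mul_assoc] at h2
    calc ENNReal.ofReal (k r) ≤ 2 * (kint σ k r x * a⁻¹) := h2
      _ ≤ 2 * (kint σ k r x * (ENNReal.ofReal C₀ * b⁻¹)) :=
          mul_le_mul_right (mul_le_mul_right hainv _) _
      _ = ENNReal.ofReal (2 * C₀) * (b⁻¹ * kint σ k r x) := by
          rw [ENNReal.ofReal_mul (by norm_num), ENNReal.ofReal_ofNat]
          ring
  -- combine
  rw [kbar_eq, kbar_eq, ← hd, ← hb]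
  calc d⁻¹ * kint σ k (2*r) x
      ≤ d⁻¹ * (kint σ k r x + ENNReal.ofReal (k r) * d) := mul_le_mul_right htail _
    _ = d⁻¹ * kint σ k r x + ENNReal.ofReal (k r) * (d⁻¹ * d) := by ring
    _ = d⁻¹ * kint σ k r x + ENNReal.ofReal (k r) := by
        rw [ENNReal.inv_mul_cancel hd0 hdt, mul_one]
    _ ≤ b⁻¹ * kint σ k r x + ENNReal.ofReal (2 * C₀) * (b⁻¹ * kint σ k r x) := by
        refine add_le_add (mul_le_mul_left (ENNReal.inv_le_inv.mpr ?_) _) hkr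
        exact measure_mono (Metric.ball_subset_ball (by linarith))
    _ = (1 + ENNReal.ofReal (2 * C₀)) * (b⁻¹ * kint σ k r x) := by ring
    _ = ENNReal.ofReal (1 + 2 * C₀) * (b⁻¹ * kint σ k r x) := by
        rw [ENNReal.ofReal_add (by norm_num) (by positivity), ENNReal.ofReal_one]

/-- Iterated halving: `kbar(2^L r) ≤ (1+2C₀)^L kbar(r)`. -/
lemma kbar_pow_le (L : ℕ) (x : Euc n) {r : ℝ} (hr : 0 < r) :
    kbar n σ k (2 ^ L * r) x ≤ ENNReal.ofReal ((1 + 2 * C₀) ^ L) * kbar n σ k r x := by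
  induction L with
  | zero => simp
  | succ L ih =>
    have h1 : (2:ℝ) ^ (L + 1) * r = 2 * (2 ^ L * r) := by ring
    calc kbar n σ k ((2:ℝ) ^ (L + 1) * r) x
        ≤ ENNReal.ofReal (1 + 2 * C₀) * kbar n σ k ((2:ℝ) ^ L * r) x := by
          rw [h1]; exact kbar_double_le hC₀ hD hk0 hmono x (by positivity)
      _ ≤ ENNReal.ofReal (1 + 2 * C₀) * (ENNReal.ofReal ((1 + 2 * C₀) ^ L) * kbar n σ k r x) :=
          mul_le_mul_right ih _
      _ = ENNReal.ofReal ((1 + 2 * C₀) ^ (L + 1)) * kbar n σ k r x := by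
          rw [← mul_assoc, ← ENNReal.ofReal_mul (by positivity), pow_succ, mul_comm ((1+2*C₀)^L)]

end Halving

section Geometry

lemma two_zpow_mul_sideLen (q : DIdx n) : (2:ℝ) ^ q.1 * sideLen n q = 1 := by
  unfold sideLen
  rw [← zpow_add₀ (two_ne_zero)]
  simp

lemma mem_dCube_iff {q : DIdx n} {y : Euc n} :
    y ∈ dCube n q ↔ ∀ i, (q.2 i : ℝ) * sideLen n q ≤ y i ∧
      y i < ((q.2 i : ℝ) + 1) * sideLen n q := by
  have he : (0:ℝ) < 2 ^ q.1 := by positivity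
  have hs : 0 < sideLen n q := sideLen_pos q
  have hes := two_zpow_mul_sideLen q
  have hid : ∀ a : ℝ, a * (2:ℝ) ^ q.1 * sideLen n q = a := by
    intro a
    calc a * (2:ℝ) ^ q.1 * sideLen n q = a * ((2:ℝ) ^ q.1 * sideLen n q) := by ring
      _ = a := by rw [hes, mul_one]
  constructor
  · intro h i
    obtain ⟨h1, h2⟩ := h i
    have h1' := mul_le_mul_of_nonneg_right h1 hs.le
    have h2' := mul_lt_mul_of_pos_right h2 hs
    have := hid (y i)
    constructor
    · linarith [this]
    · linarith [this]
  · intro h i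
    obtain ⟨h1, h2⟩ := h i
    have h1' := mul_le_mul_of_nonneg_right h1 he.le
    have h2' := mul_lt_mul_of_pos_right h2 he
    have e1 := hid ((q.2 i : ℝ))
    have e2 := hid ((q.2 i : ℝ) + 1)
    constructor
    · nlinarith [h1', e1, hes]
    · nlinarith [h2', e2, hes]

lemma dCenter_mem (q : DIdx n) : dCenter n q ∈ dCube n q := by
  rw [mem_dCube_iff]
  intro i
  have hs : 0 < sideLen n q := sideLen_pos q
  have hc : dCenter n q i = ((q.2 i : ℝ) + 1/2) * sideLen n q := rfl
  rw [hc]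
  constructor
  · nlinarith [hs]
  · nlinarith [hs]

lemma abs_coord_le_dist (y z : Euc n) (i : Fin n) : |y i - z i| ≤ dist y z := by
  rw [EuclideanSpace.dist_eq]
  have h1 : dist (y i) (z i) ^ 2 ≤ ∑ j, dist (y j) (z j) ^ 2 :=
    Finset.single_le_sum (f := fun j => dist (y j) (z j) ^ 2)
      (fun j _ => sq_nonneg _) (Finset.mem_univ i)
  calc |y i - z i| = Real.sqrt (dist (y i) (z i) ^ 2) := by
        rw [Real.sqrt_sq_eq_abs, Real.dist_eq, abs_abs]
    _ ≤ _ := Real.sqrt_le_sqrt h1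

lemma abs_coord_sub_center {q : DIdx n} {y : Euc n} (hy : y ∈ dCube n q) (i : Fin n) :
    |y i - dCenter n q i| ≤ sideLen n q / 2 := by
  rw [mem_dCube_iff] at hy
  obtain ⟨h1, h2⟩ := hy i
  have hc : dCenter n q i = ((q.2 i : ℝ) + 1/2) * sideLen n q := rfl
  rw [abs_le]
  constructor <;> nlinarith [sideLen_pos q]

lemma dist_le_of_mem_dCube {q : DIdx n} {y z : Euc n} (hy : y ∈ dCube n q)
    (hz : z ∈ dCube n q) : dist y z ≤ n * sideLen n q := by
  have hs : 0 < sideLen n q := sideLen_pos q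
  have hcoord : ∀ i, dist (y i) (z i) ≤ sideLen n q := by
    intro i
    have h1 := abs_coord_sub_center hy i
    have h2 := abs_coord_sub_center hz i
    rw [Real.dist_eq]
    calc |y i - z i| ≤ |y i - dCenter n q i| + |dCenter n q i - z i| := abs_sub_le _ _ _
      _ ≤ sideLen n q / 2 + sideLen n q / 2 := by
          rw [abs_sub_comm (dCenter n q i)]
          exact add_le_add h1 h2
      _ = sideLen n q := by ring
  rw [EuclideanSpace.dist_eq]
  calc Real.sqrt (∑ i, dist (y i) (z i) ^ 2)
      ≤ Real.sqrt (∑ _i : Fin n, sideLen n q ^ 2) := by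
        refine Real.sqrt_le_sqrt (Finset.sum_le_sum fun i _ => ?_)
        exact pow_le_pow_left₀ dist_nonneg (hcoord i) 2
    _ = Real.sqrt (n * sideLen n q ^ 2) := by rw [Finset.sum_const, Finset.card_univ]; simp
    _ ≤ Real.sqrt ((n * sideLen n q) ^ 2) := by
        refine Real.sqrt_le_sqrt ?_
        have : (n:ℝ) ≤ (n:ℝ)^2 := by exact_mod_cast Nat.le_self_pow two_ne_zero n
        nlinarith [sq_nonneg (sideLen n q)]
    _ = n * sideLen n q := Real.sqrt_sq (by positivity)

lemma dCube_subset_ball {q : DIdx n} {c' : Euc n} (hc : c' ∈ dCube n q) :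
    dCube n q ⊆ Metric.ball c' ((n + 1) * sideLen n q) := by
  intro y hy
  rw [Metric.mem_ball]
  calc dist y c' ≤ n * sideLen n q := dist_le_of_mem_dCube hy hc
    _ < (n + 1) * sideLen n q := by nlinarith [sideLen_pos q]

lemma ball_subset_dCube (q : DIdx n) :
    Metric.ball (dCenter n q) (sideLen n q / 2) ⊆ dCube n q := by
  intro y hy
  rw [Metric.mem_ball] at hy
  rw [mem_dCube_iff]
  intro i
  have h1 : |y i - dCenter n q i| < sideLen n q / 2 :=
    lt_of_le_of_lt (abs_coord_le_dist y (dCenter n q) i) hy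
  have hc : dCenter n q i = ((q.2 i : ℝ) + 1/2) * sideLen n q := rfl
  rw [abs_lt] at h1
  constructor <;> nlinarith [sideLen_pos q]

end Geometry

section Children

/-- The child of a dyadic cube determined by a choice of half in each coordinate. -/
def childIdx (q : DIdx n) (ε : Fin n → Bool) : DIdx n :=
  (q.1 + 1, fun i => 2 * q.2 i + if ε i then 1 else 0)

lemma sideLen_childIdx (q : DIdx n) (ε : Fin n → Bool) :
    sideLen n (childIdx q ε) = sideLen n q / 2 := by
  unfold sideLen childIdx
  rw [neg_add, zpow_add₀ (two_ne_zero : (2:ℝ) ≠ 0)]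
  simp [div_eq_mul_inv]

lemma two_zpow_succ (κ : ℤ) : (2:ℝ) ^ (κ + 1) = 2 * (2:ℝ) ^ κ := by
  rw [zpow_add₀ (two_ne_zero : (2:ℝ) ≠ 0)]
  ring

lemma mem_childIdx_iff {q : DIdx n} {ε : Fin n → Bool} {y : Euc n} :
    y ∈ dCube n (childIdx q ε) ↔ ∀ i,
      (2 * (q.2 i : ℝ) + (if ε i then 1 else 0) : ℝ) ≤ 2 * ((2:ℝ) ^ q.1 * y i) ∧
      2 * ((2:ℝ) ^ q.1 * y i) < (2 * (q.2 i : ℝ) + (if ε i then 1 else 0) : ℝ) + 1 := by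
  have hcast : ∀ i, ((2 * q.2 i + if ε i then 1 else 0 : ℤ) : ℝ)
      = 2 * (q.2 i : ℝ) + (if ε i then 1 else 0) := by
    intro i; rcases Bool.dichotomy (ε i) with hb | hb <;> rw [hb] <;> push_cast <;> simp
  simp only [dCube, childIdx, mem_setOf_eq]
  refine forall_congr' fun i => ?_
  rw [hcast i, two_zpow_succ, mul_assoc]

lemma childIdx_subset (q : DIdx n) (ε : Fin n → Bool) :
    dCube n (childIdx q ε) ⊆ dCube n q := by
  intro y hy
  rw [mem_childIdx_iff] at hy
  intro i
  obtain ⟨h1, h2⟩ := hy i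
  constructor <;> rcases Bool.dichotomy (ε i) with h | h <;> rw [h] at h1 h2 <;>
    simp at h1 h2 <;> linarith

lemma dCube_eq_iUnion_children (q : DIdx n) :
    dCube n q = ⋃ ε : Fin n → Bool, dCube n (childIdx q ε) := by
  ext y
  simp only [mem_iUnion]
  constructor
  · intro hy
    refine ⟨fun i => decide ((2 * (q.2 i : ℝ) + 1) ≤ 2 * ((2:ℝ) ^ q.1 * y i)), ?_⟩
    rw [mem_childIdx_iff]
    intro i
    obtain ⟨h1, h2⟩ := hy i
    by_cases hcase : (2 * (q.2 i : ℝ) + 1) ≤ 2 * ((2:ℝ) ^ q.1 * y i)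
    · rw [if_pos (by exact decide_eq_true hcase)]
      constructor <;> linarith
    · push_neg at hcase
      rw [if_neg (by simp [hcase.not_ge])]
      constructor <;> linarith
  · rintro ⟨ε, hy⟩
    exact childIdx_subset q ε hy

lemma childIdx_disjoint (q : DIdx n) : Pairwise fun ε ε' : Fin n → Bool =>
    Disjoint (dCube n (childIdx q ε)) (dCube n (childIdx q ε')) := by
  intro ε ε' hne
  rw [Set.disjoint_left]
  intro y hy hy'
  obtain ⟨i, hi⟩ := Function.ne_iff.mp hne
  rw [mem_childIdx_iff] at hy hy'
  obtain ⟨h1, h2⟩ := hy i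
  obtain ⟨h1', h2'⟩ := hy' i
  rcases Bool.dichotomy (ε i) with h | h <;> rcases Bool.dichotomy (ε' i) with h' | h' <;>
    rw [h] at h1 h2 <;> rw [h'] at h1' h2' <;> simp_all <;> linarith

lemma childIdx_injective : Function.Injective
    (fun qε : DIdx n × (Fin n → Bool) => childIdx qε.1 qε.2) := by
  rintro ⟨⟨κ, m⟩, ε⟩ ⟨⟨κ', m'⟩, ε'⟩ h
  simp only [childIdx, Prod.mk.injEq] at h
  obtain ⟨hκ, hm⟩ := h
  have hκ' : κ = κ' := by omega
  have key : ∀ i, m i = m' i ∧ ε i = ε' i := by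
    intro i
    have := congrFun hm i
    rcases Bool.dichotomy (ε i) with h1 | h1 <;> rcases Bool.dichotomy (ε' i) with h2 | h2 <;>
      simp [h1, h2] at this ⊢ <;> omega
  refine Prod.ext (Prod.ext hκ' (funext fun i => (key i).1)) (funext fun i => (key i).2)

lemma measure_dCube_eq_sum (μ : Measure (Euc n)) (q : DIdx n) :
    μ (dCube n q) = ∑ ε : Fin n → Bool, μ (dCube n (childIdx q ε)) := by
  rw [dCube_eq_iUnion_children q, measure_iUnion (childIdx_disjoint q)
    (fun ε => measurable_dCube _), tsum_fintype]

end Children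

section Comparisons

lemma rpow_sum_le {ι : Type*} [Fintype ι] [Nonempty ι] (f : ι → ℝ≥0∞) {t : ℝ} (ht : 0 ≤ t) :
    (∑ i, f i) ^ t ≤ (Fintype.card ι : ℝ≥0∞) ^ t * ∑ i, (f i) ^ t := by
  obtain ⟨i₀, -, hmax⟩ := Finset.exists_max_image Finset.univ f Finset.univ_nonempty
  calc (∑ i, f i) ^ t ≤ ((Fintype.card ι : ℝ≥0∞) * f i₀) ^ t := by
        refine ENNReal.rpow_le_rpow ?_ ht
        calc ∑ i, f i ≤ Finset.univ.card • f i₀ :=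
              Finset.sum_le_card_nsmul _ _ _ (fun i _ => hmax i (Finset.mem_univ i))
          _ = (Fintype.card ι : ℝ≥0∞) * f i₀ := by
              rw [nsmul_eq_mul, Finset.card_univ]
    _ = (Fintype.card ι : ℝ≥0∞) ^ t * (f i₀) ^ t := ENNReal.mul_rpow_of_nonneg _ _ ht
    _ ≤ (Fintype.card ι : ℝ≥0∞) ^ t * ∑ i, (f i) ^ t := by
        refine mul_le_mul_right ?_ _
        exact Finset.single_le_sum (f := fun i => f i ^ t)
          (fun i _ => zero_le) (Finset.mem_univ i₀)

lemma card_children : (Fintype.card (Fin n → Bool)) = 2 ^ n := by simp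

variable {σ : Measure (Euc n)} [IsLocallyFiniteMeasure σ] {C₀ : ℝ} (hC₀ : 0 < C₀)
  (hD : ∀ (x : Euc n) (r : ℝ), 0 < r →
    σ (Metric.ball x (2 * r)) ≤ ENNReal.ofReal C₀ * σ (Metric.ball x r))

include hC₀ hD

/-- Comparison of the measure of a cube with that of each of its children. -/
lemma sigma_cube_le (q : DIdx n) (ε : Fin n → Bool) :
    σ (dCube n q) ≤ ENNReal.ofReal (C₀ ^ (n + 4)) * σ (dCube n (childIdx q ε)) := by
  set s := sideLen n q with hsdef
  have hs : 0 < s := sideLen_pos q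
  have hsc : sideLen n (childIdx q ε) = s / 2 := sideLen_childIdx q ε
  set xc := dCenter n (childIdx q ε) with hxc
  have hxcQ : xc ∈ dCube n q := childIdx_subset q ε (dCenter_mem _)
  have h1 : dCube n q ⊆ Metric.ball xc ((n + 1) * s) := dCube_subset_ball hxcQ
  have h2 : Metric.ball xc (s / 2 / 2) ⊆ dCube n (childIdx q ε) := by
    have := ball_subset_dCube (childIdx q ε)
    rwa [hsc] at this
  have hpow : ((n:ℝ) + 1) * s ≤ 2 ^ (n + 4) * (s / 2 / 2) := by
    have h3 : (n:ℝ) + 1 ≤ 2 ^ (n + 2) := by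
      have := @Nat.lt_two_pow_self (n + 1)
      have h4 : (n:ℝ) + 1 < 2 ^ (n + 1) := by exact_mod_cast this
      have h5 : (2:ℝ) ^ (n + 1) ≤ 2 ^ (n + 2) :=
        pow_le_pow_right₀ (by norm_num) (by omega)
      linarith
    have h6 : (2:ℝ) ^ (n + 4) * (s / 2 / 2) = 2 ^ (n + 2) * s := by
      rw [pow_succ, pow_succ]
      ring
    rw [h6]
    nlinarith [hs]
  calc σ (dCube n q) ≤ σ (Metric.ball xc ((n + 1) * s)) := measure_mono h1
    _ ≤ ENNReal.ofReal (C₀ ^ (n + 4)) * σ (Metric.ball xc (s / 2 / 2)) :=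
        doubling_scale hC₀ hD (n + 4) xc (by positivity) (by nlinarith [hs]) hpow
    _ ≤ ENNReal.ofReal (C₀ ^ (n + 4)) * σ (dCube n (childIdx q ε)) :=
        mul_le_mul_right (measure_mono h2) _

variable {k : ℝ → ℝ} (hk0 : ∀ r ∈ Ioi (0:ℝ), 0 ≤ k r) (hmono : AntitoneOn k (Ioi (0:ℝ)))
  {A : ℝ} (hA : 0 < A)
  (hL : ∀ (x : Euc n) (r : ℝ), 0 < r → ∀ y ∈ Metric.ball x r, ∀ z ∈ Metric.ball x r,
      kbar n σ k r y ≤ ENNReal.ofReal A * kbar n σ k r z)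

include hk0 hmono hA hL

/-- Comparison of `kbar` at a cube with `kbar` at each of its children. -/
lemma kbar_cube_le (q : DIdx n) (ε : Fin n → Bool) :
    kbar n σ k (sideLen n q) (dCenter n q) ≤
      ENNReal.ofReal (C₀ ^ (n + 1) * (A * (1 + 2 * C₀) ^ (n + 2))) *
        kbar n σ k (sideLen n (childIdx q ε)) (dCenter n (childIdx q ε)) := by
  set s := sideLen n q with hsdef
  have hs : 0 < s := sideLen_pos q
  have hsc : sideLen n (childIdx q ε) = s / 2 := sideLen_childIdx q ε
  set xQ := dCenter n q with hxQ
  set xc := dCenter n (childIdx q ε) with hxc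
  have hxQQ : xQ ∈ dCube n q := dCenter_mem q
  have hxcQ : xc ∈ dCube n q := childIdx_subset q ε (dCenter_mem _)
  set R := (2:ℝ) ^ (n + 1) * s with hR
  have hRpos : 0 < R := by positivity
  have hnR : (n:ℝ) * s < R := by
    have h4 : (n:ℝ) < 2 ^ (n + 1) := by
      exact_mod_cast Nat.lt_of_lt_of_le (@Nat.lt_two_pow_self n) (Nat.pow_le_pow_right (by norm_num) (by omega))
    nlinarith [hs]
  -- step (a)
  have ha : kbar n σ k s xQ ≤ ENNReal.ofReal (C₀ ^ (n + 1)) * kbar n σ k R xQ := by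
    refine kbar_le_kbar_bigger hC₀ hD k (n + 1) xQ hs ?_ le_rfl
    rw [hR]
    nlinarith [hs, one_le_pow₀ (by norm_num : (1:ℝ) ≤ 2) (n := n + 1)]
  -- step (b): LBO
  have hb : kbar n σ k R xQ ≤ ENNReal.ofReal A * kbar n σ k R xc := by
    refine hL xQ R hRpos xQ (Metric.mem_ball_self hRpos) xc ?_
    rw [Metric.mem_ball]
    calc dist xc xQ ≤ n * s := dist_le_of_mem_dCube hxcQ hxQQ
      _ < R := hnR
  -- step (c)
  have hc : kbar n σ k R xc ≤ ENNReal.ofReal ((1 + 2 * C₀) ^ (n + 2)) * kbar n σ k (s / 2) xc := by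
    have hR2 : R = 2 ^ (n + 2) * (s / 2) := by
      rw [hR, pow_succ]
      ring
    rw [hR2]
    exact kbar_pow_le hC₀ hD hk0 hmono (n + 2) xc (by positivity)
  rw [hsc]
  calc kbar n σ k s xQ ≤ ENNReal.ofReal (C₀ ^ (n + 1)) * kbar n σ k R xQ := ha
    _ ≤ ENNReal.ofReal (C₀ ^ (n + 1)) * (ENNReal.ofReal A * kbar n σ k R xc) :=
        mul_le_mul_right hb _
    _ ≤ ENNReal.ofReal (C₀ ^ (n + 1)) * (ENNReal.ofReal A *
        (ENNReal.ofReal ((1 + 2 * C₀) ^ (n + 2)) * kbar n σ k (s / 2) xc)) := by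
        exact mul_le_mul_right (mul_le_mul_right hc _) _
    _ = ENNReal.ofReal (C₀ ^ (n + 1) * (A * (1 + 2 * C₀) ^ (n + 2))) * kbar n σ k (s / 2) xc := by
        rw [ENNReal.ofReal_mul (by positivity), ENNReal.ofReal_mul hA.le]
        ring

variable {p : ℝ} (hp : 1 < p)

include hp

lemma term_le_sum_children (μ : Measure (Euc n)) {a : ℝ} (ha : 0 < a) (q : DIdx n) :
    ENNReal.ofReal (k (a * sideLen n q)) * σ (dCube n q) *
      (kbar n σ k (sideLen n q) (dCenter n q)) ^ (p / (p - 1) - 1) *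
        (μ (dCube n q)) ^ (p / (p - 1)) ≤
    (ENNReal.ofReal (C₀ ^ (n + 4)) *
      (ENNReal.ofReal (C₀ ^ (n + 1) * (A * (1 + 2 * C₀) ^ (n + 2)))) ^ (p / (p - 1) - 1) *
        ((2:ℝ≥0∞) ^ n) ^ (p / (p - 1))) *
      ∑ ε : Fin n → Bool,
        ENNReal.ofReal (k (2 * a * sideLen n (childIdx q ε))) * σ (dCube n (childIdx q ε)) *
          (kbar n σ k (sideLen n (childIdx q ε)) (dCenter n (childIdx q ε))) ^ (p / (p - 1) - 1) *
            (μ (dCube n (childIdx q ε))) ^ (p / (p - 1)) := by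
  have hp1 : (0:ℝ) < p - 1 := by linarith
  have hq0 : 0 ≤ p / (p - 1) := by positivity
  have hq1 : 0 ≤ p / (p - 1) - 1 := by
    rw [le_sub_iff_add_le, zero_add, le_div_iff₀ hp1]
    linarith
  have hKeq : ∀ ε : Fin n → Bool, a * sideLen n q = 2 * a * sideLen n (childIdx q ε) := by
    intro ε
    rw [sideLen_childIdx]
    ring
  have hμ : (μ (dCube n q)) ^ (p / (p - 1)) ≤
      ((2:ℝ≥0∞) ^ n) ^ (p / (p - 1)) *
        ∑ ε : Fin n → Bool, (μ (dCube n (childIdx q ε))) ^ (p / (p - 1)) := by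
    rw [measure_dCube_eq_sum μ q]
    have := rpow_sum_le (fun ε : Fin n → Bool => μ (dCube n (childIdx q ε))) hq0
    rwa [card_children, Nat.cast_pow, Nat.cast_ofNat] at this
  set K := ENNReal.ofReal (k (a * sideLen n q)) with hK
  set Kb := (kbar n σ k (sideLen n q) (dCenter n q)) ^ (p / (p - 1) - 1) with hKb
  calc K * σ (dCube n q) * Kb * (μ (dCube n q)) ^ (p / (p - 1))
      ≤ K * σ (dCube n q) * Kb * (((2:ℝ≥0∞) ^ n) ^ (p / (p - 1)) *
          ∑ ε : Fin n → Bool, (μ (dCube n (childIdx q ε))) ^ (p / (p - 1))) :=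
        mul_le_mul_right hμ _
    _ = ((2:ℝ≥0∞) ^ n) ^ (p / (p - 1)) *
          ∑ ε : Fin n → Bool, K * σ (dCube n q) * Kb * (μ (dCube n (childIdx q ε))) ^ (p / (p - 1)) := by
        simp only [Finset.mul_sum]
        exact Finset.sum_congr rfl fun ε _ => by ring
    _ ≤ ((2:ℝ≥0∞) ^ n) ^ (p / (p - 1)) *
          ∑ ε : Fin n → Bool, (ENNReal.ofReal (C₀ ^ (n + 4)) *
            (ENNReal.ofReal (C₀ ^ (n + 1) * (A * (1 + 2 * C₀) ^ (n + 2)))) ^ (p / (p - 1) - 1)) *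
            (ENNReal.ofReal (k (2 * a * sideLen n (childIdx q ε))) * σ (dCube n (childIdx q ε)) *
              (kbar n σ k (sideLen n (childIdx q ε)) (dCenter n (childIdx q ε))) ^ (p / (p - 1) - 1) *
                (μ (dCube n (childIdx q ε))) ^ (p / (p - 1))) := by
        refine mul_le_mul_right (Finset.sum_le_sum fun ε _ => ?_) _
        have hσc : σ (dCube n q) ≤ ENNReal.ofReal (C₀ ^ (n + 4)) * σ (dCube n (childIdx q ε)) :=
          sigma_cube_le hC₀ hD q ε
        have hKbc : Kb ≤
            (ENNReal.ofReal (C₀ ^ (n + 1) * (A * (1 + 2 * C₀) ^ (n + 2)))) ^ (p / (p - 1) - 1) *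
              (kbar n σ k (sideLen n (childIdx q ε)) (dCenter n (childIdx q ε))) ^ (p / (p - 1) - 1) := by
          rw [hKb, ← ENNReal.mul_rpow_of_nonneg _ _ hq1]
          exact ENNReal.rpow_le_rpow (kbar_cube_le hC₀ hD hk0 hmono hA hL q ε) hq1
        have hKc : K = ENNReal.ofReal (k (2 * a * sideLen n (childIdx q ε))) := by
          rw [hK, hKeq ε]
        rw [hKc]
        calc ENNReal.ofReal (k (2 * a * sideLen n (childIdx q ε))) * σ (dCube n q) * Kb *
              (μ (dCube n (childIdx q ε))) ^ (p / (p - 1))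
            ≤ ENNReal.ofReal (k (2 * a * sideLen n (childIdx q ε))) *
                (ENNReal.ofReal (C₀ ^ (n + 4)) * σ (dCube n (childIdx q ε))) *
                ((ENNReal.ofReal (C₀ ^ (n + 1) * (A * (1 + 2 * C₀) ^ (n + 2)))) ^ (p / (p - 1) - 1) *
                  (kbar n σ k (sideLen n (childIdx q ε)) (dCenter n (childIdx q ε))) ^ (p / (p - 1) - 1)) *
                (μ (dCube n (childIdx q ε))) ^ (p / (p - 1)) := by
              exact mul_le_mul_left (mul_le_mul' (mul_le_mul_right hσc _) hKbc) _
          _ = _ := by ring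
    _ = _ := by
        simp only [Finset.mul_sum]
        exact Finset.sum_congr rfl fun ε _ => by ring

/-- One-step doubling of the scale parameter in the dyadic Wolff sum. -/
lemma wolffSum_step (μ : Measure (Euc n)) {a : ℝ} (ha : 0 < a) :
    dyadicWolffSum n σ k p a μ ≤
      (ENNReal.ofReal (C₀ ^ (n + 4)) *
        (ENNReal.ofReal (C₀ ^ (n + 1) * (A * (1 + 2 * C₀) ^ (n + 2)))) ^ (p / (p - 1) - 1) *
          ((2:ℝ≥0∞) ^ n) ^ (p / (p - 1))) * dyadicWolffSum n σ k p (2 * a) μ := by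
  set cC := ENNReal.ofReal (C₀ ^ (n + 4)) *
      (ENNReal.ofReal (C₀ ^ (n + 1) * (A * (1 + 2 * C₀) ^ (n + 2)))) ^ (p / (p - 1) - 1) *
        ((2:ℝ≥0∞) ^ n) ^ (p / (p - 1)) with hcC
  set g : DIdx n → ℝ≥0∞ := fun q =>
    ENNReal.ofReal (k (2 * a * sideLen n q)) * σ (dCube n q) *
      (kbar n σ k (sideLen n q) (dCenter n q)) ^ (p / (p - 1) - 1) *
        (μ (dCube n q)) ^ (p / (p - 1)) with hg
  calc dyadicWolffSum n σ k p a μ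
      ≤ ∑' q : DIdx n, cC * ∑ ε : Fin n → Bool, g (childIdx q ε) := by
        refine ENNReal.tsum_le_tsum fun q => ?_
        exact term_le_sum_children hC₀ hD hk0 hmono hA hL hp μ ha q
    _ = cC * ∑' q : DIdx n, ∑ ε : Fin n → Bool, g (childIdx q ε) := ENNReal.tsum_mul_left
    _ = cC * ∑' qε : DIdx n × (Fin n → Bool), g (childIdx qε.1 qε.2) := by
        congr 1
        conv_rhs => rw [ENNReal.tsum_prod']
        exact tsum_congr fun q => (tsum_fintype (fun ε : Fin n → Bool => g (childIdx q ε))).symm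
    _ ≤ cC * ∑' q : DIdx n, g q :=
        mul_le_mul_right (tsum_comp_le_tsum_of_injective childIdx_injective g) _
    _ = cC * dyadicWolffSum n σ k p (2 * a) μ := rfl

omit hC₀ hD hA hL hp in
/-- Monotonicity of the dyadic Wolff sum in the scale parameter. -/
lemma wolffSum_anti (μ : Measure (Euc n)) {a b : ℝ} (ha : 0 < a) (hab : a ≤ b) :
    dyadicWolffSum n σ k p b μ ≤ dyadicWolffSum n σ k p a μ := by
  refine ENNReal.tsum_le_tsum fun q => ?_
  have hs : 0 < sideLen n q := sideLen_pos q
  refine mul_le_mul_left (mul_le_mul_left (mul_le_mul_left ?_ _) _) _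
  refine ENNReal.ofReal_le_ofReal ?_
  have hb : 0 < b := lt_of_lt_of_le ha hab
  exact hmono (mem_Ioi.mpr (by positivity)) (mem_Ioi.mpr (mul_pos hb hs))
    (by nlinarith [hs])

/-- Iterated version of `wolffSum_step`. -/
lemma wolffSum_iter (μ : Measure (Euc n)) (j : ℕ) {a : ℝ} (ha : 0 < a) :
    dyadicWolffSum n σ k p a μ ≤
      (ENNReal.ofReal (C₀ ^ (n + 4)) *
        (ENNReal.ofReal (C₀ ^ (n + 1) * (A * (1 + 2 * C₀) ^ (n + 2)))) ^ (p / (p - 1) - 1) *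
          ((2:ℝ≥0∞) ^ n) ^ (p / (p - 1))) ^ j * dyadicWolffSum n σ k p (2 ^ j * a) μ := by
  induction j generalizing a with
  | zero => simp
  | succ j ih =>
    calc dyadicWolffSum n σ k p a μ
        ≤ _ * dyadicWolffSum n σ k p (2 * a) μ := wolffSum_step hC₀ hD hk0 hmono hA hL hp μ ha
      _ ≤ _ * (_ ^ j * dyadicWolffSum n σ k p (2 ^ j * (2 * a)) μ) :=
          mul_le_mul_right (ih (by positivity)) _
      _ = _ ^ (j + 1) * dyadicWolffSum n σ k p (2 ^ (j + 1) * a) μ := by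
          rw [← mul_assoc, ← pow_succ']
          congr 2
          ring

end Comparisons

/-- Let `k : (0,∞) → [0,∞)` be nonincreasing and lower semicontinuous,
`σ` locally finite and doubling with `(k,σ)` satisfying LBO, `1 < p < ∞` and `0 < c < ∞`.
Then, with constants independent of `μ`, for every locally finite positive Borel measure
`μ`, `∑_Q k(c r_Q) σ(Q) (k̄(r_Q)(x_Q))^{p'-1} μ(Q)^{p'}` is comparable to
`∑_Q k(r_Q) σ(Q) (k̄(r_Q)(x_Q))^{p'-1} μ(Q)^{p'}`. -/
theorem stmt17 (n : ℕ) (hn : 0 < n) (k : ℝ → ℝ)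
    (hk0 : ∀ r ∈ Ioi (0:ℝ), 0 ≤ k r) (hmono : AntitoneOn k (Ioi (0:ℝ)))
    (hlsc : LowerSemicontinuousOn k (Ioi (0:ℝ)))
    (σ : Measure (Euc n)) [IsLocallyFiniteMeasure σ]
    (p : ℝ) (hp : 1 < p) (c : ℝ) (hc : 0 < c)
    (hσ : Doubling n σ) (hLBO : LBO n σ k) :
    ∃ C : ℝ, 0 < C ∧
      ∀ (μ : Measure (Euc n)), IsLocallyFiniteMeasure μ →
        dyadicWolffSum n σ k p c μ ≤ ENNReal.ofReal C * dyadicWolffSum n σ k p 1 μ ∧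
        dyadicWolffSum n σ k p 1 μ ≤ ENNReal.ofReal C * dyadicWolffSum n σ k p c μ := by
  obtain ⟨C₀, hC₀, hD⟩ := hσ
  obtain ⟨A, hA, hL⟩ := hLBO
  set cC := ENNReal.ofReal (C₀ ^ (n + 4)) *
      (ENNReal.ofReal (C₀ ^ (n + 1) * (A * (1 + 2 * C₀) ^ (n + 2)))) ^ (p / (p - 1) - 1) *
        ((2:ℝ≥0∞) ^ n) ^ (p / (p - 1)) with hcC
  have hp1 : (0:ℝ) < p - 1 := by linarith
  have hq0 : 0 ≤ p / (p - 1) := by positivity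
  have hq1 : 0 ≤ p / (p - 1) - 1 := by
    rw [le_sub_iff_add_le, zero_add, le_div_iff₀ hp1]
    linarith
  have hcC_ne_top : cC ≠ ∞ := by
    rw [hcC]
    refine ENNReal.mul_ne_top (ENNReal.mul_ne_top ENNReal.ofReal_ne_top ?_) ?_
    · exact ENNReal.rpow_ne_top_of_nonneg hq1 ENNReal.ofReal_ne_top
    · exact ENNReal.rpow_ne_top_of_nonneg hq0 (by simp)
  obtain ⟨j₁, hj₁⟩ := pow_unbounded_of_one_lt c (one_lt_two (α := ℝ))
  obtain ⟨j₂, hj₂⟩ := pow_unbounded_of_one_lt c⁻¹ (one_lt_two (α := ℝ))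
  set j := max j₁ j₂ with hj
  have hcj : c < 2 ^ j :=
    lt_of_lt_of_le hj₁ (pow_le_pow_right₀ (by norm_num) (le_max_left _ _))
  have hcj' : c⁻¹ < 2 ^ j :=
    lt_of_lt_of_le hj₂ (pow_le_pow_right₀ (by norm_num) (le_max_right _ _))
  have h2j : (0:ℝ) < 2 ^ j := by positivity
  have hinvc : ((2:ℝ) ^ j)⁻¹ ≤ c := by
    rw [inv_le_comm₀ h2j hc]
    exact hcj'.le
  have hne : cC ^ j ≠ ∞ := ENNReal.pow_ne_top hcC_ne_top
  refine ⟨(cC ^ j).toReal + 1, by positivity, fun μ _ => ?_⟩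
  have hCle : cC ^ j ≤ ENNReal.ofReal ((cC ^ j).toReal + 1) := by
    conv_lhs => rw [← ENNReal.ofReal_toReal hne]
    exact ENNReal.ofReal_le_ofReal (by linarith [ENNReal.toReal_nonneg (a := cC ^ j)])
  constructor
  · calc dyadicWolffSum n σ k p c μ
        ≤ dyadicWolffSum n σ k p (((2:ℝ) ^ j)⁻¹) μ :=
          wolffSum_anti hk0 hmono μ (by positivity) hinvc
      _ ≤ cC ^ j * dyadicWolffSum n σ k p ((2:ℝ) ^ j * ((2:ℝ) ^ j)⁻¹) μ :=
          wolffSum_iter hC₀ hD hk0 hmono hA hL hp μ j (by positivity)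
      _ = cC ^ j * dyadicWolffSum n σ k p 1 μ := by
          rw [mul_inv_cancel₀ h2j.ne']
      _ ≤ ENNReal.ofReal ((cC ^ j).toReal + 1) * dyadicWolffSum n σ k p 1 μ :=
          mul_le_mul_left hCle _
  · calc dyadicWolffSum n σ k p 1 μ
        ≤ dyadicWolffSum n σ k p (c * ((2:ℝ) ^ j)⁻¹) μ := by
          refine wolffSum_anti hk0 hmono μ (by positivity) ?_
          rw [mul_inv_le_iff₀ h2j, one_mul]
          exact hcj.le
      _ ≤ cC ^ j * dyadicWolffSum n σ k p ((2:ℝ) ^ j * (c * ((2:ℝ) ^ j)⁻¹)) μ :=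
          wolffSum_iter hC₀ hD hk0 hmono hA hL hp μ j (by positivity)
      _ = cC ^ j * dyadicWolffSum n σ k p c μ := by
          rw [show (2:ℝ) ^ j * (c * ((2:ℝ) ^ j)⁻¹) = c by field_simp]
      _ ≤ ENNReal.ofReal ((cC ^ j).toReal + 1) * dyadicWolffSum n σ k p c μ :=
          mul_le_mul_left hCle _
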